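/- Let A ≥ 1 be an integer, η > 0, C > 0 with η ≤ 1/(270·C). Let ψ(x) := (1/η) Σ_{a=1}^{A} log(1/x(a)) be the log-barrier regularizer on vectors x ∈ ℝ^A with positive coordinates, and let D_ψ(x, x') := ψ(x) − ψ(x') − ⟨∇ψ(x'), x − x'⟩ = (1/η) Σ_a [ log(x'(a)/x(a)) + x(a)/x'(a) − 1 ] be the associated Bregman divergence. Let Δ_A⁺ denote the set of probability vectors in ℝ^A with all coordinates positive. Let a₀ ∈ Δ_A⁺, b₁, b₂ ∈ ℝ^A, and suppose a₁ ∈ Δ_A⁺ minimizes F₁(a) := ⟨a, b₁⟩ + D_ψ(a, a₀) over Δ_A⁺, and a₂ ∈ Δ_A⁺ minimizes F₂(a) := ⟨a, b₂⟩ + D_ψ(a, a₀) over Δ_A⁺. If √( Σ_a η · a₁(a)² · (b₁(a) − b₂(a))² ) ≤ 12 √η · C, then |a₂(i) − a₁(i)| ≤ 60 η C · a₁(i) for every coordinate i. -/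

import Mathlib

open Finset

lemma aux_log (u : ℝ) (hu : -(1/2) ≤ u) : u - 2*u^2 ≤ Real.log (1+u) := by
  have h1 : (0:ℝ) < 1 + u := by linarith
  have h2 : Real.log (1+u)⁻¹ ≤ (1+u)⁻¹ - 1 := Real.log_le_sub_one_of_pos (by positivity)
  rw [Real.log_inv] at h2
  have h3 : 1 - (1+u)⁻¹ ≤ Real.log (1+u) := by linarith
  have h4 : u - 2*u^2 ≤ 1 - (1+u)⁻¹ := by
    rw [inv_eq_one_div, ← sub_nonneg]
    have : 1 - 1/(1+u) - (u - 2*u^2) = u^2*(1+2*u)/(1+u) := by field_simp; ring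
    rw [this]
    apply div_nonneg (by nlinarith) (by linarith)
  linarith

lemma aux_limit (L K t₀ : ℝ) (ht₀ : 0 < t₀) (hK : 0 ≤ K)
    (h : ∀ t, 0 < t → t ≤ t₀ → 0 ≤ t*L + t^2*K) : 0 ≤ L := by
  by_contra hL
  push_neg at hL
  set t := min t₀ ((-L)/(2*(K+1))) with ht
  have htpos : 0 < t := lt_min ht₀ (div_pos (by linarith) (by linarith))
  have h1 := h t htpos (min_le_left _ _)
  have h2 : t ≤ (-L)/(2*(K+1)) := min_le_right _ _
  have h3 : t*K ≤ -L/2 := by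
    have := mul_le_mul_of_nonneg_right h2 hK
    have h4 : (-L)/(2*(K+1))*K ≤ -L/2 := by
      rw [div_mul_eq_mul_div, div_le_div_iff₀ (by positivity) (by norm_num)]
      nlinarith
    linarith
  nlinarith


lemma aux_VI (A : ℕ) (hA : 1 ≤ A) (η : ℝ) (hη : 0 < η)
    (a₀ a₁ y b : Fin A → ℝ)
    (h₀ : ∀ a, 0 < a₀ a) (h₁ : ∀ a, 0 < a₁ a) (hy : ∀ a, 0 < y a)
    (hs₁ : ∑ a, a₁ a = 1) (hsy : ∑ a, y a = 1)
    (hmin : ∀ x : Fin A → ℝ, (∀ a, 0 < x a) → ∑ a, x a = 1 →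
      (∑ a, a₁ a * b a) + (1/η) * ∑ a, (Real.log (a₀ a / a₁ a) + a₁ a / a₀ a - 1)
      ≤ (∑ a, x a * b a) + (1/η) * ∑ a, (Real.log (a₀ a / x a) + x a / a₀ a - 1)) :
    0 ≤ (∑ a, (y a - a₁ a) * b a)
        + (1/η) * ∑ a, (y a - a₁ a) * (1/(a₀ a) - 1/(a₁ a)) := by
  have hne : (Finset.univ : Finset (Fin A)).Nonempty := by
    haveI : NeZero A := ⟨by omega⟩
    exact Finset.univ_nonempty
  set d : Fin A → ℝ := fun a => y a - a₁ a with hd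
  clear_value d
  set t₀ : ℝ := Finset.univ.inf' hne (fun a => a₁ a / (2*(|d a| + 1))) with ht₀
  clear_value t₀
  have ht₀pos : 0 < t₀ := by
    rw [ht₀, Finset.lt_inf'_iff]
    intro a _
    have := h₁ a
    positivity
  have ht₀le : ∀ a, t₀ ≤ a₁ a / (2*(|d a| + 1)) := by
    intro a
    rw [ht₀]
    exact Finset.inf'_le _ (Finset.mem_univ a)
  rw [show (∑ a, (y a - a₁ a) * b a) = ∑ a, d a * b a by simp only [hd],
     show (∑ a, (y a - a₁ a) * (1/(a₀ a) - 1/(a₁ a)))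
        = ∑ a, d a * (1/(a₀ a) - 1/(a₁ a)) by simp only [hd]]
  apply aux_limit _ ((2/η) * ∑ a, (d a)^2/(a₁ a)^2) t₀ ht₀pos (by positivity)
  intro t ht htle
  set x : Fin A → ℝ := fun a => a₁ a + t * d a with hx
  clear_value x
  -- basic coordinate bounds
  have hub : ∀ a, -(1/2) ≤ t * d a / a₁ a ∧ t * d a / a₁ a ≤ 1/2 := by
    intro a
    have h1a := h₁ a
    have habs : t * |d a| ≤ a₁ a / 2 := by
      have h2 : t ≤ a₁ a / (2*(|d a| + 1)) := le_trans htle (ht₀le a)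
      have h3 : t * |d a| ≤ a₁ a / (2*(|d a| + 1)) * |d a| :=
        mul_le_mul_of_nonneg_right h2 (abs_nonneg _)
      have h4 : a₁ a / (2*(|d a| + 1)) * |d a| ≤ a₁ a / 2 := by
        rw [div_mul_eq_mul_div, div_le_div_iff₀ (by positivity) (by norm_num)]
        nlinarith [abs_nonneg (d a)]
      linarith
    have hd1 : -(a₁ a/2) ≤ t * d a ∧ t * d a ≤ a₁ a/2 := by
      have := abs_le.mp (le_trans (by rw [abs_mul, abs_of_pos ht]) habs :
        |t * d a| ≤ a₁ a / 2)
      exact this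
    constructor
    · rw [le_div_iff₀ h1a]; nlinarith [hd1.1]
    · rw [div_le_iff₀ h1a]; nlinarith [hd1.2]
  have hxpos : ∀ a, 0 < x a := by
    intro a
    have h1a := h₁ a
    have := (hub a).1
    have : -(1/2) * a₁ a ≤ t * d a := by
      rw [le_div_iff₀ h1a] at this; linarith
    have h5 : 0 < a₁ a + t * d a := by linarith
    simpa [hx] using h5
  have hxsum : ∑ a, x a = 1 := by
    simp only [hx]
    rw [Finset.sum_add_distrib, ← Finset.mul_sum]
    have : ∑ a, d a = 0 := by
      simp only [hd, Finset.sum_sub_distrib, hsy, hs₁]; ring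
    rw [this, hs₁]; ring
  have h1 := hmin x hxpos hxsum
  -- per-coordinate bound on the barrier change
  have key : ∑ a, (Real.log (a₀ a / x a) + x a / a₀ a - 1)
      ≤ ∑ a, ((Real.log (a₀ a / a₁ a) + a₁ a / a₀ a - 1)
        + (t * d a * (1/(a₀ a) - 1/(a₁ a)) + 2 * t^2 * (d a)^2/(a₁ a)^2)) := by
    apply Finset.sum_le_sum
    intro a _
    set u : ℝ := t * d a / a₁ a with hu
    clear_value u
    have h1a := h₁ a
    have h0a := h₀ a
    have hu1 : -(1/2) ≤ u := by rw [hu]; exact (hub a).1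
    have hlog := aux_log u hu1
    have hxa : x a = a₁ a * (1 + u) := by
      simp only [hx, hu]; field_simp
    have h1u : (0:ℝ) < 1 + u := by linarith
    have hlogx : Real.log (x a) = Real.log (a₁ a) + Real.log (1+u) := by
      rw [hxa, Real.log_mul (ne_of_gt h1a) (ne_of_gt h1u)]
    have e1 : Real.log (a₀ a / x a) = Real.log (a₀ a) - Real.log (x a) :=
      Real.log_div (ne_of_gt h0a) (ne_of_gt (hxpos a))
    have e2 : Real.log (a₀ a / a₁ a) = Real.log (a₀ a) - Real.log (a₁ a) :=
      Real.log_div (ne_of_gt h0a) (ne_of_gt h1a)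
    have hua : a₁ a * u = t * d a := by rw [hu, mul_div_assoc', mul_div_right_comm, div_self h1a.ne', one_mul]
    have hu2 : (a₁ a)^2 * u^2 = t^2 * (d a)^2 := by rw [← mul_pow, hua, mul_pow]
    rw [e1, e2, hlogx, hxa]
    have expand : a₁ a * (1 + u) / a₀ a = a₁ a / a₀ a + t * d a / a₀ a := by
      rw [mul_add, add_div, mul_one, hua]
    rw [expand]
    have et1 : t * d a * (1/(a₀ a) - 1/(a₁ a)) = t * d a / a₀ a - u := by
      rw [mul_sub, mul_one_div, mul_one_div, hu]
    have et2 : 2 * t^2 * (d a)^2/(a₁ a)^2 = 2 * u^2 := by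
      rw [hu, div_pow]; ring
    rw [et1, et2]
    linarith
  -- reassemble
  rw [Finset.sum_add_distrib] at key
  have hsum1 : ∑ a, x a * b a = ∑ a, a₁ a * b a + t * ∑ a, d a * b a := by
    rw [Finset.mul_sum, ← Finset.sum_add_distrib]
    apply Finset.sum_congr rfl
    intro a _; simp only [hx]; ring
  have hsum2 : ∑ a, (t * d a * (1/(a₀ a) - 1/(a₁ a)) + 2 * t^2 * (d a)^2/(a₁ a)^2)
      = t * ∑ a, d a * (1/(a₀ a) - 1/(a₁ a)) + 2 * t^2 * ∑ a, (d a)^2/(a₁ a)^2 := by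
    rw [Finset.sum_add_distrib, Finset.mul_sum, Finset.mul_sum]
    congr 1
    · apply Finset.sum_congr rfl; intro a _; ring
    · apply Finset.sum_congr rfl; intro a _; ring
  rw [hsum2] at key
  rw [hsum1] at h1
  have hη' : (0:ℝ) < 1/η := by positivity
  have keym := mul_le_mul_of_nonneg_left key hη'.le
  have eqA : t * ((∑ a, d a * b a) + (1/η) * ∑ a, d a * (1/(a₀ a) - 1/(a₁ a)))
      = t * (∑ a, d a * b a) + (1/η) * (t * ∑ a, d a * (1/(a₀ a) - 1/(a₁ a))) := by ring
  have eqB : t^2 * ((2/η) * ∑ a, (d a)^2/(a₁ a)^2)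
      = (1/η) * (2 * t^2 * ∑ a, (d a)^2/(a₁ a)^2) := by ring
  have eqC : (1/η) * ((∑ a, (Real.log (a₀ a / a₁ a) + a₁ a / a₀ a - 1))
        + (t * ∑ a, d a * (1/(a₀ a) - 1/(a₁ a)) + 2 * t^2 * ∑ a, (d a)^2/(a₁ a)^2))
      = (1/η) * (∑ a, (Real.log (a₀ a / a₁ a) + a₁ a / a₀ a - 1))
        + (1/η) * (t * ∑ a, d a * (1/(a₀ a) - 1/(a₁ a)))
        + (1/η) * (2 * t^2 * ∑ a, (d a)^2/(a₁ a)^2) := by ring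
  linarith [h1, keym, eqA, eqB, eqC]

set_option maxHeartbeats 1000000 in
theorem log_barrier_minimizers_stability
    (A : ℕ) (hA : 1 ≤ A) (η C : ℝ) (hη : 0 < η) (hC : 0 < C)
    (hηC : η ≤ 1 / (270 * C))
    (D : (Fin A → ℝ) → (Fin A → ℝ) → ℝ)
    (hD : ∀ x x', D x x' =
      (1 / η) * ∑ a, (Real.log (x' a / x a) + x a / x' a - 1))
    (a₀ a₁ a₂ : Fin A → ℝ) (b₁ b₂ : Fin A → ℝ)
    (ha₀ : (∀ a, 0 < a₀ a) ∧ ∑ a, a₀ a = 1)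
    (ha₁ : (∀ a, 0 < a₁ a) ∧ ∑ a, a₁ a = 1)
    (ha₂ : (∀ a, 0 < a₂ a) ∧ ∑ a, a₂ a = 1)
    (hmin₁ : ∀ x : Fin A → ℝ, (∀ a, 0 < x a) → ∑ a, x a = 1 →
      (∑ a, a₁ a * b₁ a) + D a₁ a₀ ≤ (∑ a, x a * b₁ a) + D x a₀)
    (hmin₂ : ∀ x : Fin A → ℝ, (∀ a, 0 < x a) → ∑ a, x a = 1 →
      (∑ a, a₂ a * b₂ a) + D a₂ a₀ ≤ (∑ a, x a * b₂ a) + D x a₀)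
    (hclose : Real.sqrt (∑ a, η * (a₁ a) ^ 2 * (b₁ a - b₂ a) ^ 2) ≤
      12 * Real.sqrt η * C) :
    ∀ i, |a₂ i - a₁ i| ≤ 60 * η * C * a₁ i := by
  obtain ⟨h₀pos, h₀sum⟩ := ha₀
  obtain ⟨h₁pos, h₁sum⟩ := ha₁
  obtain ⟨h₂pos, h₂sum⟩ := ha₂
  have hne : (Finset.univ : Finset (Fin A)).Nonempty := by
    haveI : NeZero A := ⟨by omega⟩
    exact Finset.univ_nonempty
  simp only [hD] at hmin₁ hmin₂
  have VI1 := aux_VI A hA η hη a₀ a₁ a₂ b₁ h₀pos h₁pos h₂pos h₁sum h₂sum hmin₁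
  have VI2 := aux_VI A hA η hη a₀ a₂ a₁ b₂ h₀pos h₂pos h₁pos h₂sum h₁sum hmin₂
  -- key inequality : (1/η) S ≤ P where S = ∑ (a₂-a₁)²/(a₁a₂), P = ∑ (a₂-a₁)(b₁-b₂)
  have eq1 : ∑ a, (a₂ a - a₁ a) * b₁ a + ∑ a, (a₁ a - a₂ a) * b₂ a
      = ∑ a, (a₂ a - a₁ a) * (b₁ a - b₂ a) := by
    rw [← Finset.sum_add_distrib]; apply Finset.sum_congr rfl; intros; ring
  have eq2 : ∑ a, (a₂ a - a₁ a) * (1/(a₀ a) - 1/(a₁ a))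
        + ∑ a, (a₁ a - a₂ a) * (1/(a₀ a) - 1/(a₂ a))
      = -∑ a, (a₂ a - a₁ a)^2/(a₁ a * a₂ a) := by
    rw [← Finset.sum_add_distrib, ← Finset.sum_neg_distrib]
    apply Finset.sum_congr rfl
    intro a _
    have h1 := (h₀pos a).ne'
    have h2 := (h₁pos a).ne'
    have h3 := (h₂pos a).ne'
    field_simp
    ring
  have eqD : (1/η) * ∑ a, (a₂ a - a₁ a) * (1/(a₀ a) - 1/(a₁ a))
        + (1/η) * ∑ a, (a₁ a - a₂ a) * (1/(a₀ a) - 1/(a₂ a))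
      = -((1/η) * ∑ a, (a₂ a - a₁ a)^2/(a₁ a * a₂ a)) := by
    rw [← mul_add, eq2]; ring
  have key : (1/η) * ∑ a, (a₂ a - a₁ a)^2/(a₁ a * a₂ a)
      ≤ ∑ a, (a₂ a - a₁ a) * (b₁ a - b₂ a) := by
    linarith [VI1, VI2, eq1, eqD]
  -- Cauchy-Schwarz
  have hS0 : (0:ℝ) ≤ ∑ a, (a₂ a - a₁ a)^2/(a₁ a * a₂ a) := by
    apply Finset.sum_nonneg; intro a _
    have := h₁pos a; have := h₂pos a; positivity
  have hQ0 : (0:ℝ) ≤ ∑ a, (a₁ a * a₂ a) * (b₁ a - b₂ a)^2 := by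
    apply Finset.sum_nonneg; intro a _
    have := h₁pos a; have := h₂pos a; positivity
  have CS : (∑ a, (a₂ a - a₁ a) * (b₁ a - b₂ a))^2
      ≤ (∑ a, (a₂ a - a₁ a)^2/(a₁ a * a₂ a)) * ∑ a, (a₁ a * a₂ a) * (b₁ a - b₂ a)^2 := by
    have h := Finset.sum_mul_sq_le_sq_mul_sq Finset.univ
      (fun a => (a₂ a - a₁ a)/Real.sqrt (a₁ a * a₂ a))
      (fun a => Real.sqrt (a₁ a * a₂ a) * (b₁ a - b₂ a))
    have e1 : ∀ a : Fin A, (a₂ a - a₁ a)/Real.sqrt (a₁ a * a₂ a)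
        * (Real.sqrt (a₁ a * a₂ a) * (b₁ a - b₂ a)) = (a₂ a - a₁ a) * (b₁ a - b₂ a) := by
      intro a
      have hp : (0:ℝ) < a₁ a * a₂ a := mul_pos (h₁pos a) (h₂pos a)
      have hs : Real.sqrt (a₁ a * a₂ a) ≠ 0 := (Real.sqrt_pos.mpr hp).ne'
      rw [div_mul_eq_mul_div, mul_comm (Real.sqrt _) _, ← mul_assoc, mul_div_assoc, div_self hs, mul_one]
    have e2 : ∀ a : Fin A, ((a₂ a - a₁ a)/Real.sqrt (a₁ a * a₂ a))^2
        = (a₂ a - a₁ a)^2/(a₁ a * a₂ a) := by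
      intro a
      have hp : (0:ℝ) ≤ a₁ a * a₂ a := (mul_pos (h₁pos a) (h₂pos a)).le
      rw [div_pow, Real.sq_sqrt hp]
    have e3 : ∀ a : Fin A, (Real.sqrt (a₁ a * a₂ a) * (b₁ a - b₂ a))^2
        = (a₁ a * a₂ a) * (b₁ a - b₂ a)^2 := by
      intro a
      have hp : (0:ℝ) ≤ a₁ a * a₂ a := (mul_pos (h₁pos a) (h₂pos a)).le
      rw [mul_pow, Real.sq_sqrt hp]
    simp only [e1, e2, e3] at h
    exact h
  -- S ≤ η * P
  have hSP : (∑ a, (a₂ a - a₁ a)^2/(a₁ a * a₂ a))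
      ≤ η * ∑ a, (a₂ a - a₁ a) * (b₁ a - b₂ a) := by
    have h := mul_le_mul_of_nonneg_left key hη.le
    rwa [← mul_assoc, mul_one_div, div_self hη.ne', one_mul] at h
  -- S ≤ η² Q'
  have hSQ : (∑ a, (a₂ a - a₁ a)^2/(a₁ a * a₂ a))
      ≤ η^2 * ∑ a, (a₁ a * a₂ a) * (b₁ a - b₂ a)^2 := by
    rcases eq_or_lt_of_le hS0 with h | h
    · rw [← h]; positivity
    · have hmul : (∑ a, (a₂ a - a₁ a)^2/(a₁ a * a₂ a)) * (∑ a, (a₂ a - a₁ a)^2/(a₁ a * a₂ a))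
          ≤ (η^2 * ∑ a, (a₁ a * a₂ a) * (b₁ a - b₂ a)^2) * (∑ a, (a₂ a - a₁ a)^2/(a₁ a * a₂ a)) := by
        nlinarith [CS, hSP, h]
      exact le_of_mul_le_mul_right hmul h
  -- bound from hclose: ∑ a₁² (b₁-b₂)² ≤ 144 C²
  have hW : ∑ a, (a₁ a)^2 * (b₁ a - b₂ a)^2 ≤ 144 * C^2 := by
    have h0 : (0:ℝ) ≤ ∑ a, η * (a₁ a)^2 * (b₁ a - b₂ a)^2 := by
      apply Finset.sum_nonneg; intro a _; positivity
    have h1 : ∑ a, η * (a₁ a)^2 * (b₁ a - b₂ a)^2 ≤ (12 * Real.sqrt η * C)^2 := by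
      calc ∑ a, η * (a₁ a)^2 * (b₁ a - b₂ a)^2
          = (Real.sqrt (∑ a, η * (a₁ a)^2 * (b₁ a - b₂ a)^2))^2 := (Real.sq_sqrt h0).symm
        _ ≤ (12 * Real.sqrt η * C)^2 := by
            apply pow_le_pow_left₀ (Real.sqrt_nonneg _) hclose
    have h2 : (12 * Real.sqrt η * C)^2 = 144 * η * C^2 := by
      have := Real.sq_sqrt hη.le
      nlinarith [this]
    have h3 : ∑ a, η * (a₁ a)^2 * (b₁ a - b₂ a)^2 = η * ∑ a, (a₁ a)^2 * (b₁ a - b₂ a)^2 := by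
      rw [Finset.mul_sum]; apply Finset.sum_congr rfl; intros; ring
    rw [h3, h2] at h1
    have h4 : η * ∑ a, (a₁ a)^2 * (b₁ a - b₂ a)^2 ≤ η * (144 * C^2) := by
      calc η * ∑ a, (a₁ a)^2 * (b₁ a - b₂ a)^2 ≤ 144 * η * C^2 := h1
        _ = η * (144 * C^2) := by ring
    exact le_of_mul_le_mul_left h4 hη
  -- the multiplicative max M
  set M : ℝ := Finset.univ.sup' hne (fun a => (a₂ a - a₁ a)/a₁ a) with hMdef
  clear_value M
  have hMle : ∀ a, (a₂ a - a₁ a)/a₁ a ≤ M := by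
    intro a; rw [hMdef]; exact Finset.le_sup' (fun a => (a₂ a - a₁ a)/a₁ a) (Finset.mem_univ a)
  have hM0 : 0 ≤ M := by
    have hex : ∃ j, a₁ j ≤ a₂ j := by
      by_contra hcon
      push_neg at hcon
      have hlt : ∑ a, a₂ a < ∑ a, a₁ a :=
        Finset.sum_lt_sum_of_nonempty hne (fun j _ => hcon j)
      rw [h₂sum, h₁sum] at hlt
      exact lt_irrefl 1 hlt
    obtain ⟨j, hj⟩ := hex
    exact le_trans (div_nonneg (sub_nonneg.mpr hj) (h₁pos j).le) (hMle j)
  have ha₂le : ∀ a, a₂ a ≤ (1+M) * a₁ a := by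
    intro a
    have h := hMle a
    rw [div_le_iff₀ (h₁pos a)] at h
    linarith
  have hQ'M : ∑ a, (a₁ a * a₂ a) * (b₁ a - b₂ a)^2
      ≤ (1+M) * ∑ a, (a₁ a)^2 * (b₁ a - b₂ a)^2 := by
    rw [Finset.mul_sum]
    apply Finset.sum_le_sum
    intro a _
    have hnn : (0:ℝ) ≤ a₁ a * (b₁ a - b₂ a)^2 := mul_nonneg (h₁pos a).le (sq_nonneg _)
    linarith [mul_le_mul_of_nonneg_left (ha₂le a) hnn]
  -- combine: S ≤ 144 η² C² (1+M)
  have hSfin : (∑ a, (a₂ a - a₁ a)^2/(a₁ a * a₂ a)) ≤ 144 * η^2 * C^2 * (1+M) := by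
    have h1 : η^2 * ∑ a, (a₁ a * a₂ a) * (b₁ a - b₂ a)^2
        ≤ η^2 * ((1+M) * (144 * C^2)) := by
      apply mul_le_mul_of_nonneg_left _ (by positivity)
      calc ∑ a, (a₁ a * a₂ a) * (b₁ a - b₂ a)^2
          ≤ (1+M) * ∑ a, (a₁ a)^2 * (b₁ a - b₂ a)^2 := hQ'M
        _ ≤ (1+M) * (144 * C^2) := by
            apply mul_le_mul_of_nonneg_left hW (by linarith)
    calc (∑ a, (a₂ a - a₁ a)^2/(a₁ a * a₂ a)) ≤ η^2 * ∑ a, (a₁ a * a₂ a) * (b₁ a - b₂ a)^2 := hSQ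
      _ ≤ η^2 * ((1+M) * (144 * C^2)) := h1
      _ = 144 * η^2 * C^2 * (1+M) := by ring
  -- per-coordinate bound
  have habs : ∀ i, |a₂ i - a₁ i| ≤ 12 * η * C * (1+M) * a₁ i := by
    intro i
    have hterm : (a₂ i - a₁ i)^2/(a₁ i * a₂ i) ≤ ∑ a, (a₂ a - a₁ a)^2/(a₁ a * a₂ a) := by
      apply Finset.single_le_sum (f := fun a => (a₂ a - a₁ a)^2/(a₁ a * a₂ a))
        _ (Finset.mem_univ i)
      intro a _
      have := h₁pos a; have := h₂pos a; positivity
    have hp : (0:ℝ) < a₁ i * a₂ i := mul_pos (h₁pos i) (h₂pos i)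
    have hsq : (a₂ i - a₁ i)^2 ≤ (144 * η^2 * C^2 * (1+M)) * (a₁ i * a₂ i) := by
      rw [← div_le_iff₀ hp] at *
      calc (a₂ i - a₁ i)^2/(a₁ i * a₂ i) ≤ _ := hterm
        _ ≤ 144 * η^2 * C^2 * (1+M) := hSfin
    have hsq2 : (a₂ i - a₁ i)^2 ≤ (12 * η * C * (1+M) * a₁ i)^2 := by
      have h2 : a₂ i ≤ (1+M) * a₁ i := ha₂le i
      have hnn : (0:ℝ) ≤ 144 * η^2 * C^2 * (1+M) * a₁ i := by
        have := h₁pos i; positivity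
      have h3 := mul_le_mul_of_nonneg_left h2 hnn
      nlinarith [hsq, h3]
    have hrhs : (0:ℝ) ≤ 12 * η * C * (1+M) * a₁ i := by
      have := h₁pos i; positivity
    rw [abs_le]
    constructor <;> nlinarith [hsq2, hrhs]
  -- bound M
  have hεC : η * C ≤ 1/270 := by
    have h := mul_le_mul_of_nonneg_right hηC hC.le
    have : 1 / (270 * C) * C = 1/270 := by field_simp
    linarith [h, this.le, this.ge]
  have hM43 : M ≤ 2/43 := by
    obtain ⟨j, -, hj⟩ := Finset.exists_mem_eq_sup' hne (fun a => (a₂ a - a₁ a)/a₁ a)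
    rw [← hMdef] at hj
    have hMa : M * a₁ j = a₂ j - a₁ j := by
      rw [hj]; exact div_mul_cancel₀ _ (h₁pos j).ne'
    have h1 : M * a₁ j ≤ 12 * η * C * (1+M) * a₁ j := by
      rw [hMa]
      calc a₂ j - a₁ j ≤ |a₂ j - a₁ j| := le_abs_self _
        _ ≤ 12 * η * C * (1+M) * a₁ j := habs j
    have h2 : M ≤ 12 * η * C * (1+M) := le_of_mul_le_mul_right h1 (h₁pos j)
    nlinarith [mul_le_mul_of_nonneg_right hεC hM0, hM0]
  -- finish
  intro i
  have h := habs i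
  have hfin : 12 * η * C * (1+M) * a₁ i ≤ 60 * η * C * a₁ i := by
    have hpos : (0:ℝ) ≤ 12 * η * C * a₁ i := by have := h₁pos i; positivity
    nlinarith [mul_le_mul_of_nonneg_left hM43 hpos]
  linarith
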